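/- Let D_t ⊆ {Z ∈ L^1 : Z ≥ 0, E[Z|F_t] = 1} be nonempty for each t, and define φ_t(m) := essinf_{Z ∈ D_t} E[Z·m | F_t]. Then each φ_t is local and monotone, and satisfies φ_t(m) = m for every F_t-measurable m, i.e., {φ_t} is a projective update rule. -/

import Mathlib

open MeasureTheory

/-- The family of robust conditional expectations `φ_t(m) = essinf_{Z ∈ D_t} E[Z·m|F_t]`
(the a.e.-greatest lower bound of the family), built from determining sets
`D_t ⊆ {Z ∈ L¹ : Z ≥ 0, E[Z|F_t] = 1}`, is local, monotone, and projective
(`φ_t(m) = m` for `F_t`-measurable `m`). -/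
theorem robustExpectation_projective_updateRule
    {Ω : Type*} {F : MeasurableSpace Ω} (𝓕 : ℕ → MeasurableSpace Ω)
    (h𝓕 : ∀ t, 𝓕 t ≤ F) (hmono𝓕 : ∀ t s, t ≤ s → 𝓕 t ≤ 𝓕 s)
    (μ : Measure Ω) [IsProbabilityMeasure μ]
    (D : ℕ → Set (Ω → ℝ))
    (hDne : ∀ t, (D t).Nonempty)
    (hD : ∀ t, ∀ Z ∈ D t, Integrable Z μ ∧ (0 ≤ᵐ[μ] Z) ∧
      μ[Z|𝓕 t] =ᵐ[μ] fun _ => (1 : ℝ))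
    (φ : ℕ → (Ω → ℝ) → Ω → ℝ)
    -- `φ t m` is the a.e.-greatest lower bound of `{E[Z·m|F_t] : Z ∈ D t}`
    (hφ : ∀ t (m : Ω → ℝ), Measurable m → (∃ C : ℝ, ∀ ω, |m ω| ≤ C) →
      (∀ Z ∈ D t, φ t m ≤ᵐ[μ] μ[fun ω => Z ω * m ω|𝓕 t]) ∧
      (∀ W : Ω → ℝ, (∀ Z ∈ D t, W ≤ᵐ[μ] μ[fun ω => Z ω * m ω|𝓕 t]) →
        W ≤ᵐ[μ] φ t m)) :
    -- monotonicity
    (∀ t (m m' : Ω → ℝ), Measurable m → (∃ C : ℝ, ∀ ω, |m ω| ≤ C) →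
      Measurable m' → (∃ C : ℝ, ∀ ω, |m' ω| ≤ C) →
      m' ≤ᵐ[μ] m → φ t m' ≤ᵐ[μ] φ t m) ∧
    -- locality
    (∀ t (m : Ω → ℝ) (A : Set Ω), Measurable m → (∃ C : ℝ, ∀ ω, |m ω| ≤ C) →
      MeasurableSet[𝓕 t] A →
      A.indicator (φ t m) =ᵐ[μ] A.indicator (φ t (A.indicator m))) ∧
    -- projectivity
    (∀ t (m : Ω → ℝ), Measurable[𝓕 t] m → (∃ C : ℝ, ∀ ω, |m ω| ≤ C) →
      φ t m =ᵐ[μ] m) := by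
  classical
  -- integrability of products
  have hint : ∀ t (Z : Ω → ℝ), Z ∈ D t → ∀ (m : Ω → ℝ), Measurable m →
      (∃ C : ℝ, ∀ ω, |m ω| ≤ C) → Integrable (fun ω => Z ω * m ω) μ := by
    intro t Z hZ m hm ⟨C, hC⟩
    have h := (hD t Z hZ).1.bdd_mul (hm.aestronglyMeasurable) (c := C) (Filter.Eventually.of_forall fun ω => by
      simpa [Real.norm_eq_abs] using hC ω)
    simpa [mul_comm] using h
  refine ⟨?_, ?_, ?_⟩
  · -- monotonicity
    intro t m m' hm hmb hm' hmb' hle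
    refine (hφ t m hm hmb).2 (φ t m') ?_
    intro Z hZ
    refine ((hφ t m' hm' hmb').1 Z hZ).trans ?_
    refine condExp_mono (hint t Z hZ m' hm' hmb') (hint t Z hZ m hm hmb) ?_
    filter_upwards [hle, (hD t Z hZ).2.1] with ω h1 h2
    exact mul_le_mul_of_nonneg_left h1 h2
  · -- locality
    intro t m A hm hmb hA
    have hAF : MeasurableSet A := h𝓕 t A hA
    have hmA : Measurable (A.indicator m) := hm.indicator hAF
    obtain ⟨C, hC⟩ := hmb
    have hmAb : ∃ C : ℝ, ∀ ω, |A.indicator m ω| ≤ C := by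
      refine ⟨C, fun ω => ?_⟩
      by_cases h : ω ∈ A
      · simp [Set.indicator_of_mem h, hC ω]
      · simp [Set.indicator_of_notMem h]
        exact le_trans (abs_nonneg (m ω)) (hC ω)
    -- conditional expectation identity: E[Z·(1_A m)|F] = 1_A E[Z m|F] a.e.
    have hkey : ∀ Z ∈ D t,
        μ[fun ω => Z ω * (A.indicator m) ω|𝓕 t]
          =ᵐ[μ] A.indicator (μ[fun ω => Z ω * m ω|𝓕 t]) := by
      intro Z hZ
      have heq : (fun ω => Z ω * (A.indicator m) ω)
          = A.indicator (fun ω => Z ω * m ω) := by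
        funext ω
        by_cases h : ω ∈ A <;>
          simp [Set.indicator_of_mem, Set.indicator_of_notMem, h]
      rw [heq]
      exact condExp_indicator (hint t Z hZ m hm ⟨C, hC⟩) hA
    -- φ m ≤ φ (1_A m) on A
    have h1 : A.piecewise (φ t m) (φ t (A.indicator m)) ≤ᵐ[μ] φ t (A.indicator m) := by
      refine (hφ t (A.indicator m) hmA hmAb).2 _ ?_
      intro Z hZ
      filter_upwards [(hφ t m hm ⟨C, hC⟩).1 Z hZ,
        (hφ t (A.indicator m) hmA hmAb).1 Z hZ, hkey Z hZ] with ω ha hb hc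
      by_cases h : ω ∈ A
      · simp only [Set.piecewise_eq_of_mem _ _ _ h]
        rw [hc, Set.indicator_of_mem h]; exact ha
      · simp only [Set.piecewise_eq_of_notMem _ _ _ h]
        exact hb
    -- φ (1_A m) ≤ φ m on A
    have h2 : A.piecewise (φ t (A.indicator m)) (φ t m) ≤ᵐ[μ] φ t m := by
      refine (hφ t m hm ⟨C, hC⟩).2 _ ?_
      intro Z hZ
      filter_upwards [(hφ t m hm ⟨C, hC⟩).1 Z hZ,
        (hφ t (A.indicator m) hmA hmAb).1 Z hZ, hkey Z hZ] with ω ha hb hc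
      by_cases h : ω ∈ A
      · simp only [Set.piecewise_eq_of_mem _ _ _ h]
        have := hb.trans (le_of_eq (by rw [hc, Set.indicator_of_mem h]))
        exact this
      · simp only [Set.piecewise_eq_of_notMem _ _ _ h]
        exact ha
    filter_upwards [h1, h2] with ω h1ω h2ω
    by_cases h : ω ∈ A
    · rw [Set.indicator_of_mem h, Set.indicator_of_mem h]
      rw [Set.piecewise_eq_of_mem _ _ _ h] at h1ω h2ω
      exact le_antisymm h1ω h2ω
    · rw [Set.indicator_of_notMem h, Set.indicator_of_notMem h]
  · -- projectivity
    intro t m hm hmb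
    have hmF : Measurable m := hm.mono (h𝓕 t) le_rfl
    -- for each Z ∈ D t, E[Z·m|F_t] = m a.e.
    have hkey : ∀ Z ∈ D t, μ[fun ω => Z ω * m ω|𝓕 t] =ᵐ[μ] m := by
      intro Z hZ
      have hsm : StronglyMeasurable[𝓕 t] m := hm.stronglyMeasurable
      have hintmZ : Integrable (m * Z) μ := by
        have := hint t Z hZ m hmF hmb
        simpa [mul_comm, Pi.mul_def] using this
      have hpull := condExp_mul_of_stronglyMeasurable_left hsm hintmZ (hD t Z hZ).1
      have heq : (fun ω => Z ω * m ω) = m * Z := funext fun ω => mul_comm _ _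
      rw [heq]
      refine hpull.trans ?_
      filter_upwards [(hD t Z hZ).2.2] with ω hω
      simp [Pi.mul_apply, hω]
    obtain ⟨Z₀, hZ₀⟩ := hDne t
    have hle : φ t m ≤ᵐ[μ] m :=
      ((hφ t m hmF hmb).1 Z₀ hZ₀).trans (hkey Z₀ hZ₀).le
    have hge : m ≤ᵐ[μ] φ t m := by
      refine (hφ t m hmF hmb).2 m ?_
      intro Z hZ
      exact (hkey Z hZ).symm.le
    filter_upwards [hle, hge] with ω h1 h2
    exact le_antisymm h1 h2
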